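/- Let R be an Erdős sieve over an étale ℚ-algebra K with weak light tails for a Følner sequence (I_N), and let A ⊆ O_K be a finite R-admissible set (i.e. −A + R_i ≠ O_K for every i). Then the density d_I({x ∈ O_K : x + A ⊆ F_R}) exists and equals ∏_{i≥1} (1 − |−A + R_i|/N(𝔟_i)), which is strictly positive; in particular there are infinitely many x ∈ O_K with x + A ⊆ F_R. -/

import Mathlib

open Filter Topology MeasureTheory Pointwise symmDiff

noncomputable section

namespace ErdosSieve

variable {O : Type} [CommRing O]

/-- A sieve over (the ring of integers of) an étale `ℚ`-algebra: a sequence of pairwise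
coprime invertible (i.e. finite-quotient) ideals `b i` together with, for each `i`, a finite
set `gen i` of representatives, so that the sieved-out set is `R_i = gen i + b i`, which is
required to be a proper subset of the ring. -/
structure Sieve (O : Type) [CommRing O] : Type where
  b : ℕ → Ideal O
  gen : ℕ → Finset O
  coprime : ∀ i j, i ≠ j → b i ⊔ b j = ⊤
  finQuot : ∀ i, Finite (O ⧸ b i)
  ne_univ : ∀ i, (↑(gen i) : Set O) + (↑(b i) : Set O) ≠ Set.univ

/-- The `i`-th sieved-out set `R_i = gen i + b i`. -/
def Sieve.RSet (S : Sieve O) (i : ℕ) : Set O := (↑(S.gen i) : Set O) + (↑(S.b i) : Set O)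

/-- The set `F_R` of `R`-free numbers. -/
def Sieve.FR (S : Sieve O) : Set O := (⋃ i, S.RSet i)ᶜ

/-- The norm `N(b i)` of the `i`-th ideal. -/
def Sieve.normb (S : Sieve O) (i : ℕ) : ℕ := Nat.card (O ⧸ S.b i)

/-- The number `|R_i|` of residue classes modulo `b i` met by `R_i`. -/
def Sieve.cardR (S : Sieve O) (i : ℕ) : ℕ :=
  Nat.card ((Ideal.Quotient.mk (S.b i)) '' (S.RSet i))

/-- A sieve is Erdős if `∑ |R_i| / N(b_i) < ∞`. -/
def Sieve.IsErdos (S : Sieve O) : Prop :=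
  Summable fun i => (S.cardR i : ℝ) / (S.normb i : ℝ)

/-- A Følner sequence: finite nonempty subsets of `O` which are asymptotically
translation-invariant. -/
def IsFolner (I : ℕ → Set O) : Prop :=
  (∀ N, (I N).Finite) ∧ (∀ N, (I N).Nonempty) ∧
    ∀ x : O, Tendsto
      (fun N => (Nat.card ↥(((x + ·) '' I N) ∆ (I N)) : ℝ) / (Nat.card ↥(I N) : ℝ))
      atTop (𝓝 0)

/-- Upper density along a (Følner) sequence. -/
def upperDensity (I : ℕ → Set O) (A : Set O) : ℝ :=
  limsup (fun N => (Nat.card ↥(A ∩ I N) : ℝ) / (Nat.card ↥(I N) : ℝ)) atTop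

/-- `A` has density `d` along the sequence `I`. -/
def HasDensity (I : ℕ → Set O) (A : Set O) (d : ℝ) : Prop :=
  Tendsto (fun N => (Nat.card ↥(A ∩ I N) : ℝ) / (Nat.card ↥(I N) : ℝ)) atTop (𝓝 d)

/-- `⋃_{i ≥ L} R i`. -/
def unionGe (R : ℕ → Set O) (L : ℕ) : Set O := ⋃ i, ⋃ (_ : L ≤ i), R i

/-- `⋃_{i < L} R i`. -/
def unionLt (R : ℕ → Set O) (L : ℕ) : Set O := ⋃ i, ⋃ (_ : i < L), R i

/-- The weak light tails property for a family of sieved-out sets: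
`limsup`-density of `⋃_{i ≥ L} R_i ∖ ⋃_{j < L} R_j` tends to `0` as `L → ∞`. -/
def WeakLightTailsFam (I : ℕ → Set O) (R : ℕ → Set O) : Prop :=
  Tendsto (fun L => upperDensity I (unionGe R L \ unionLt R L)) atTop (𝓝 0)

/-- The strong light tails property for a family of sieved-out sets. -/
def StrongLightTailsFam (I : ℕ → Set O) (R : ℕ → Set O) : Prop :=
  Tendsto (fun L => upperDensity I (unionGe R L)) atTop (𝓝 0)

/-- A sieve has weak light tails for `I` if it is Erdős and the tail differences have
vanishing upper density. -/
def Sieve.HasWeakLightTails (S : Sieve O) (I : ℕ → Set O) : Prop :=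
  S.IsErdos ∧ WeakLightTailsFam I S.RSet

/-- A sieve has strong light tails for `I` if it is Erdős and the tails have vanishing
upper density. -/
def Sieve.HasStrongLightTails (S : Sieve O) (I : ℕ → Set O) : Prop :=
  S.IsErdos ∧ StrongLightTailsFam I S.RSet

/-- The infinite product `∏_i (1 - |R_i|/N(b_i))`, realized as the infimum of the
(nonincreasing) sequence of partial products, i.e. as its limit. -/
def Sieve.prodDensity (S : Sieve O) : ℝ :=
  ⨅ L : ℕ, ∏ i ∈ Finset.range L, (1 - (S.cardR i : ℝ) / (S.normb i : ℝ))

/-- `A` is an `R`-admissible set: `-A + R_i ≠ O` for all `i`. -/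
def Sieve.Admissible (S : Sieve O) (A : Set O) : Prop :=
  ∀ i, -A + S.RSet i ≠ Set.univ

/-- The number `|-A + R_i|` of residue classes modulo `b i` met by `-A + R_i`. -/
def Sieve.cardShift (S : Sieve O) (A : Set O) (i : ℕ) : ℕ :=
  Nat.card ((Ideal.Quotient.mk (S.b i)) '' (-A + S.RSet i))

/-- The infinite product `∏_i (1 - |-A + R_i|/N(b_i))` (as the infimum of the
partial products). -/
def Sieve.prodDensityShift (S : Sieve O) (A : Set O) : ℝ :=
  ⨅ L : ℕ, ∏ i ∈ Finset.range L, (1 - (S.cardShift A i : ℝ) / (S.normb i : ℝ))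

/-- A subset `Y` of `O` is syndetic if finitely many translates of it cover `O`. -/
def Syndetic (Y : Set O) : Prop := ∃ C : Finset O, Y + (↑C : Set O) = Set.univ

-- Indicator of a subset of `O`, i.e. a point of the shift space `{0,1}^O`.
open Classical in
def chiSet (A : Set O) : O → Bool := fun x => if x ∈ A then true else false

/-- The shift action `S_a(A) = A - a` on `{0,1}^O`: `χ_{A - a}(x) = χ_A (x + a)`. -/
def shiftB (a : O) (f : O → Bool) : O → Bool := fun x => f (x + a)

/-- The odometer group `G_R = ∏ i, O ⧸ b i`. -/
abbrev Sieve.GR (S : Sieve O) : Type := ∀ i : ℕ, O ⧸ S.b i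

-- The map `φ_R : G_R → {0,1}^O`: `a ∈ φ_R(g)` iff `a + g i` avoids (the image of) `R_i`
-- modulo `b i` for every `i`.
open Classical in
def Sieve.phiB (S : Sieve O) (g : S.GR) : O → Bool := fun a =>
  if (∀ i, (Ideal.Quotient.mk (S.b i) a + g i) ∉ (Ideal.Quotient.mk (S.b i)) '' (S.RSet i))
  then true else false

/-- The Mirsky measure `ν_R` on `{0,1}^O`: the pushforward under `φ_R` of the Haar
probability measure of the compact group `G_R` (each factor being finite and discrete,
and the Haar measure being normalized so that the whole group has measure `1`). -/
def Sieve.mirsky (S : Sieve O) : Measure (O → Bool) := by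
  letI : ∀ i, TopologicalSpace (O ⧸ S.b i) := fun _ => ⊥
  haveI : ∀ i, DiscreteTopology (O ⧸ S.b i) := fun _ => ⟨rfl⟩
  haveI : ∀ i, Finite (O ⧸ S.b i) := S.finQuot
  haveI : ∀ i, IsTopologicalAddGroup (O ⧸ S.b i) := fun i => { }
  letI : MeasurableSpace S.GR := borel _
  haveI : BorelSpace S.GR := ⟨rfl⟩
  exact Measure.map S.phiB (Measure.addHaarMeasure (G := S.GR) ⊤)

/-- The ring of integers of the étale `ℚ`-algebra `K 0 × ⋯ × K (m-1)`. -/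
abbrev OK {m : ℕ} (K : Fin m → Type) [∀ j, Field (K j)] [∀ j, NumberField (K j)] : Type :=
  ∀ j, NumberField.RingOfIntegers (K j)

variable {m : ℕ} (K : Fin m → Type) [∀ j, Field (K j)] [∀ j, NumberField (K j)]

/-- The "ball" `B_N` in `O_K`: elements all of whose archimedean embeddings have absolute
value at most `N` (the max over embeddings of all the number-field components). -/
def ball (N : ℕ) : Set (OK K) :=
  {x | ∀ j, ∀ φ : K j →+* ℂ,
    ‖φ (algebraMap (NumberField.RingOfIntegers (K j)) (K j) (x j))‖ ≤ N}


section Aux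
set_option linter.unusedSectionVars false
variable {O : Type} [CommRing O]

def dens (I : ℕ → Set O) (B : Set O) (N : ℕ) : ℝ :=
  ((B ∩ I N).ncard : ℝ) / ((I N).ncard : ℝ)

lemma hasDensity_iff (I : ℕ → Set O) (B : Set O) (d : ℝ) :
    HasDensity I B d ↔ Tendsto (dens I B) atTop (𝓝 d) := by
  unfold HasDensity dens; simp_rw [Nat.card_coe_set_eq]

lemma upperDensity_eq (I : ℕ → Set O) (B : Set O) :
    upperDensity I B = limsup (dens I B) atTop := by
  unfold upperDensity dens; simp_rw [Nat.card_coe_set_eq]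

variable {I : ℕ → Set O}

lemma card_I_pos (hI : IsFolner I) (N : ℕ) : 0 < ((I N).ncard : ℝ) := by
  exact_mod_cast (Set.ncard_pos (hI.1 N)).2 (hI.2.1 N)

lemma dens_nonneg (B : Set O) (N : ℕ) : 0 ≤ dens I B N := by
  unfold dens; positivity

lemma dens_le_one (hI : IsFolner I) (B : Set O) (N : ℕ) : dens I B N ≤ 1 := by
  unfold dens
  rw [div_le_one (card_I_pos hI N)]
  exact_mod_cast Set.ncard_le_ncard Set.inter_subset_right (hI.1 N)

lemma ncard_inter_le_of_le (s : Set O) {J J' : Set O} (hJ : J.Finite) (hJ' : J'.Finite) :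
    ((s ∩ J').ncard : ℝ) ≤ ((s ∩ J).ncard : ℝ) + ((J' \ J).ncard : ℝ) := by
  have hsub : s ∩ J' ⊆ (s ∩ J) ∪ (J' \ J) := by
    intro x hx
    by_cases h : x ∈ J
    · exact Or.inl ⟨hx.1, h⟩
    · exact Or.inr ⟨hx.2, h⟩
  have h1 : (s ∩ J').ncard ≤ ((s ∩ J) ∪ (J' \ J)).ncard :=
    Set.ncard_le_ncard hsub ((hJ.inter_of_right s).union (hJ'.diff))
  have h2 : ((s ∩ J) ∪ (J' \ J)).ncard ≤ (s ∩ J).ncard + (J' \ J).ncard :=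
    Set.ncard_union_le _ _
  exact_mod_cast h1.trans h2

lemma abs_ncard_inter_sub_le (s : Set O) {J J' : Set O} (hJ : J.Finite) (hJ' : J'.Finite) :
    |((s ∩ J').ncard : ℝ) - ((s ∩ J).ncard : ℝ)| ≤ ((J' ∆ J).ncard : ℝ) := by
  have hfin : (J' ∆ J).Finite := by
    rw [Set.symmDiff_def]
    exact (hJ'.diff).union (hJ.diff)
  have hd1 : ((J' \ J).ncard : ℝ) ≤ ((J' ∆ J).ncard : ℝ) := by
    exact_mod_cast Set.ncard_le_ncard (by rw [Set.symmDiff_def]; exact Set.subset_union_left) hfin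
  have hd2 : ((J \ J').ncard : ℝ) ≤ ((J' ∆ J).ncard : ℝ) := by
    exact_mod_cast Set.ncard_le_ncard (by rw [Set.symmDiff_def]; exact Set.subset_union_right) hfin
  rw [abs_sub_le_iff]
  constructor
  · linarith [ncard_inter_le_of_le s hJ hJ']
  · linarith [ncard_inter_le_of_le s hJ' hJ]

lemma folner_ratio (hI : IsFolner I) (x : O) :
    Tendsto (fun N => ((((x + ·) '' I N) ∆ (I N)).ncard : ℝ) / ((I N).ncard : ℝ))
      atTop (𝓝 0) := by
  have := hI.2.2 x
  simpa [Nat.card_coe_set_eq] using this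

/-- Equidistribution of a Følner sequence among the fibers of a surjection onto a
finite group. -/
lemma hasDensity_preimage {Q : Type} [AddCommGroup Q] [Finite Q] (π : O →+ Q)
    (hπ : Function.Surjective π) (hI : IsFolner I) (B : Set Q) :
    HasDensity I (π ⁻¹' B) ((B.ncard : ℝ) / (Nat.card Q : ℝ)) := by
  classical
  haveI : Fintype Q := Fintype.ofFinite Q
  have hQ0 : (0:ℝ) < (Nat.card Q : ℝ) := by
    have : 0 < Nat.card Q := Nat.card_pos
    exact_mod_cast this
  set c : ℕ → ℝ := fun N => ((I N).ncard : ℝ) with hc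
  have hcpos : ∀ N, 0 < c N := card_I_pos hI
  set f : ℕ → Q → ℝ := fun N q => (((π ⁻¹' {q}) ∩ I N).ncard : ℝ) / c N with hf
  have hfilter : ∀ N q, (π ⁻¹' {q}) ∩ I N = ↑((hI.1 N).toFinset.filter (fun x => π x = q)) := by
    intro N q
    ext x
    simp [Set.Finite.mem_toFinset, and_comm]
  have hsum : ∀ N, ∑ q : Q, f N q = 1 := by
    intro N
    have hnat : ∑ q : Q, ((π ⁻¹' {q}) ∩ I N).ncard = (I N).ncard := by
      have h := (Finset.card_eq_sum_card_fiberwise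
        (s := (hI.1 N).toFinset) (t := Finset.univ) (f := π)
        (fun x _ => Finset.mem_univ (π x)))
      rw [Set.ncard_eq_toFinset_card _ (hI.1 N), h]
      refine Finset.sum_congr rfl (fun q _ => ?_)
      rw [hfilter N q, Set.ncard_coe_finset]
    rw [hf]
    simp only
    rw [← Finset.sum_div]
    rw [show ∑ q : Q, (((π ⁻¹' {q}) ∩ I N).ncard : ℝ) = ((I N).ncard : ℝ) by
      exact_mod_cast congrArg (Nat.cast : ℕ → ℝ) hnat]
    exact div_self (hcpos N).ne'
  have hdiff : ∀ q q' : Q, Tendsto (fun N => f N q - f N q') atTop (𝓝 0) := by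
    intro q q'
    obtain ⟨h, hh⟩ := hπ (q - q')
    have hinj : Function.Injective (fun x : O => h + x) := fun a b => by simp
    have key : ∀ N, ((π ⁻¹' {q}) ∩ ((h + ·) '' I N)).ncard = ((π ⁻¹' {q'}) ∩ I N).ncard := by
      intro N
      have himg : (fun x => h + x) '' ((π ⁻¹' {q'}) ∩ I N)
          = (π ⁻¹' {q}) ∩ ((h + ·) '' I N) := by
        rw [Set.image_inter hinj]
        congr 1
        ext z
        simp only [Set.mem_image, Set.mem_preimage, Set.mem_singleton_iff]
        constructor
        · rintro ⟨x, hx, rfl⟩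
          rw [map_add, hx, hh]
          abel
        · intro hz
          refine ⟨z - h, ?_, by abel⟩
          have : π z - π h = q - (q - q') := by rw [hz, hh]
          rw [← map_sub] at this
          rw [this]; abel
      rw [← himg, Set.ncard_image_of_injective _ hinj]
    have hb : ∀ N, ‖f N q - f N q'‖ ≤ ((((h + ·) '' I N) ∆ (I N)).ncard : ℝ) / c N := by
      intro N
      have e1 : f N q' = (((π ⁻¹' {q}) ∩ ((h + ·) '' I N)).ncard : ℝ) / c N := by
        rw [hf]; simp only; rw [key N]
      rw [e1, hf]
      simp only
      rw [div_sub_div_same, Real.norm_eq_abs, abs_div, abs_of_pos (hcpos N)]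
      have := abs_ncard_inter_sub_le (π ⁻¹' {q}) (J := I N) (J' := (h + ·) '' I N)
        (hI.1 N) ((hI.1 N).image _)
      rw [abs_sub_comm] at this
      exact div_le_div_of_nonneg_right this (hcpos N).le
    exact squeeze_zero_norm hb (folner_ratio hI h)
  have hq : ∀ q : Q, Tendsto (fun N => f N q) atTop (𝓝 (1 / (Nat.card Q : ℝ))) := by
    intro q
    have hrep : ∀ N, f N q
        = 1 / (Nat.card Q : ℝ) + (1 / (Nat.card Q : ℝ)) * ∑ q' : Q, (f N q - f N q') := by
      intro N
      have hs : ∑ q' : Q, (f N q - f N q') = (Nat.card Q : ℝ) * f N q - 1 := by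
        rw [Finset.sum_sub_distrib, hsum N, Finset.sum_const, Finset.card_univ,
          Nat.card_eq_fintype_card]
        simp [nsmul_eq_mul]
      rw [hs]
      field_simp
      ring
    have h0 : Tendsto (fun N => ∑ q' : Q, (f N q - f N q')) atTop (𝓝 0) := by
      have := tendsto_finset_sum Finset.univ (fun q' (_ : q' ∈ Finset.univ) => hdiff q q')
      simpa using this
    have h2 : Tendsto (fun N => 1 / (Nat.card Q : ℝ)
        + (1 / (Nat.card Q : ℝ)) * ∑ q' : Q, (f N q - f N q')) atTop
        (𝓝 (1 / (Nat.card Q : ℝ) + (1 / (Nat.card Q : ℝ)) * 0)) :=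
      tendsto_const_nhds.add (tendsto_const_nhds.mul h0)
    rw [mul_zero, add_zero] at h2
    exact h2.congr (fun N => (hrep N).symm)
  rw [hasDensity_iff]
  have hrepB : ∀ N, dens I (π ⁻¹' B) N = ∑ q ∈ B.toFinset, f N q := by
    intro N
    have hnat : ((π ⁻¹' B) ∩ I N).ncard = ∑ q ∈ B.toFinset, ((π ⁻¹' {q}) ∩ I N).ncard := by
      have hmem : ∀ x ∈ (hI.1 N).toFinset.filter (fun x => π x ∈ B), π x ∈ B.toFinset := by
        intro x hx
        simp only [Finset.mem_filter] at hx
        exact Set.mem_toFinset.mpr hx.2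
      have h := Finset.card_eq_sum_card_fiberwise hmem
      have hLHS : (π ⁻¹' B) ∩ I N = ↑((hI.1 N).toFinset.filter (fun x => π x ∈ B)) := by
        ext x; simp [Set.Finite.mem_toFinset, and_comm]
      rw [hLHS, Set.ncard_coe_finset, h]
      refine Finset.sum_congr rfl (fun q hq => ?_)
      rw [hfilter N q, Set.ncard_coe_finset, Finset.filter_filter]
      congr 1
      refine Finset.filter_congr (fun x _ => ?_)
      have hqB : q ∈ B := Set.mem_toFinset.mp hq
      constructor
      · rintro ⟨_, h2⟩; exact h2
      · intro h2; exact ⟨h2 ▸ hqB, h2⟩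
    unfold dens
    rw [hnat]
    push_cast
    rw [Finset.sum_div]
  have hlim : Tendsto (fun N => ∑ q ∈ B.toFinset, f N q) atTop
      (𝓝 (∑ _q ∈ B.toFinset, 1 / (Nat.card Q : ℝ))) :=
    tendsto_finset_sum B.toFinset (fun q _ => hq q)
  rw [Finset.sum_const, nsmul_eq_mul, mul_one_div] at hlim
  rw [show ((B.ncard : ℝ)) = (B.toFinset.card : ℝ) by rw [Set.ncard_eq_toFinset_card']]
  exact hlim.congr (fun N => (hrepB N).symm) 

lemma Sieve.mem_RSet_iff (S : Sieve O) (i : ℕ) (x : O) :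
    x ∈ S.RSet i ↔
      Ideal.Quotient.mk (S.b i) x ∈ (Ideal.Quotient.mk (S.b i)) '' (S.RSet i) := by
  constructor
  · exact fun h => ⟨x, h, rfl⟩
  · rintro ⟨r, hr, he⟩
    have hsub : x - r ∈ S.b i := by
      have := Ideal.Quotient.eq.mp he
      simpa using (S.b i).neg_mem this
    rw [Sieve.RSet, Set.mem_add] at hr ⊢
    obtain ⟨g, hg, h, hh, rfl⟩ := hr
    exact ⟨g, hg, h + (x - (g + h)), (S.b i).add_mem hh hsub, by ring⟩

lemma Sieve.normb_pos (S : Sieve O) (i : ℕ) : 0 < S.normb i := by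
  haveI := S.finQuot i
  exact Nat.card_pos

lemma Sieve.cardR_le (S : Sieve O) (i : ℕ) : S.cardR i ≤ S.normb i := by
  haveI := S.finQuot i
  rw [Sieve.cardR, Sieve.normb, Nat.card_coe_set_eq, ← Set.ncard_univ]
  exact Set.ncard_le_ncard (Set.subset_univ _) Set.finite_univ

lemma Sieve.cardR_lt (S : Sieve O) (i : ℕ) : S.cardR i < S.normb i := by
  haveI := S.finQuot i
  have hne : (Ideal.Quotient.mk (S.b i)) '' (S.RSet i) ≠ Set.univ := by
    intro h
    apply S.ne_univ i
    rw [show (↑(S.gen i) : Set O) + (↑(S.b i) : Set O) = S.RSet i from rfl]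
    ext x
    simp only [Set.mem_univ, iff_true]
    exact (S.mem_RSet_iff i x).mpr (h ▸ Set.mem_univ _)
  rw [Sieve.cardR, Sieve.normb, Nat.card_coe_set_eq, ← Set.ncard_univ]
  exact Set.ncard_lt_ncard (Set.ssubset_univ_iff.mpr hne) Set.finite_univ

lemma ncard_univ_pi {ι : Type} [Fintype ι] {α : ι → Type} [∀ i, Finite (α i)]
    (t : ∀ i, Set (α i)) :
    (Set.univ.pi t).ncard = ∏ i, (t i).ncard := by
  rw [← Nat.card_coe_set_eq]
  have e : ↥(Set.univ.pi t) ≃ ∀ i, ↥(t i) :=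
    ⟨fun f i => ⟨f.1 i, f.2 i (Set.mem_univ i)⟩,
     fun f => ⟨fun i => (f i).1, fun i _ => (f i).2⟩,
     fun f => rfl, fun f => rfl⟩
  rw [Nat.card_congr e, Nat.card_pi]
  simp [Nat.card_coe_set_eq]

lemma Sieve.hasDensity_FRlt (S : Sieve O) {I : ℕ → Set O} (hI : IsFolner I) (L : ℕ) :
    HasDensity I (unionLt S.RSet L)ᶜ
      (∏ i ∈ Finset.range L, (1 - (S.cardR i : ℝ) / (S.normb i : ℝ))) := by
  classical
  haveI := S.finQuot
  let π : O →+ (∀ i : Fin L, O ⧸ S.b (i : ℕ)) :=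
    { toFun := fun x i => Ideal.Quotient.mk (S.b (i : ℕ)) x
      map_zero' := by funext i; simp
      map_add' := by intro x y; funext i; simp }
  have hπ : Function.Surjective π := by
    intro v
    obtain ⟨r, hr⟩ := Ideal.pi_quotient_surjective
      (I := fun i : Fin L => S.b (i : ℕ))
      (fun i j hij => (Ideal.isCoprime_iff_sup_eq).mpr
        (S.coprime i j (Fin.val_injective.ne hij))) v
    exact ⟨r, funext fun i => hr i⟩
  set t : ∀ i : Fin L, Set (O ⧸ S.b (i : ℕ)) :=
    fun i => ((Ideal.Quotient.mk (S.b (i : ℕ))) '' (S.RSet (i : ℕ)))ᶜ with ht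
  set B : Set (∀ i : Fin L, O ⧸ S.b (i : ℕ)) := Set.univ.pi t with hB
  have hpre : π ⁻¹' B = (unionLt S.RSet L)ᶜ := by
    ext x
    simp only [Set.mem_preimage, hB, Set.mem_pi, Set.mem_univ, forall_true_left,
      Set.mem_compl_iff, unionLt, Set.mem_iUnion, ht, not_exists]
    constructor
    · intro h i hi
      intro hx
      exact h ⟨i, hi⟩ ((S.mem_RSet_iff i x).mp hx)
    · intro h i hx
      exact h i i.2 ((S.mem_RSet_iff i x).mpr hx)
  have hcard : (B.ncard : ℝ) / (Nat.card (∀ i : Fin L, O ⧸ S.b (i : ℕ)) : ℝ)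
      = ∏ i ∈ Finset.range L, (1 - (S.cardR i : ℝ) / (S.normb i : ℝ)) := by
    have h1 : B.ncard = ∏ i : Fin L, (S.normb (i : ℕ) - S.cardR (i : ℕ)) := by
      rw [hB, ncard_univ_pi]
      refine Finset.prod_congr rfl (fun i _ => ?_)
      have := Set.ncard_add_ncard_compl ((Ideal.Quotient.mk (S.b (i : ℕ))) '' (S.RSet (i : ℕ)))
      have hc : ((Ideal.Quotient.mk (S.b (i : ℕ))) '' (S.RSet (i : ℕ))).ncard
          = S.cardR (i : ℕ) := (Nat.card_coe_set_eq _).symm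
      have hn : S.normb (i : ℕ) = Nat.card (O ⧸ S.b (i : ℕ)) := rfl
      have hle := S.cardR_le (i : ℕ)
      rw [ht]
      simp only
      omega
    have h2 : Nat.card (∀ i : Fin L, O ⧸ S.b (i : ℕ)) = ∏ i : Fin L, S.normb (i : ℕ) := by
      rw [Nat.card_pi]
      rfl
    rw [h1, h2]
    push_cast [Nat.cast_sub (S.cardR_le _)]
    rw [← Finset.prod_div_distrib]
    rw [← Fin.prod_univ_eq_prod_range (fun i => 1 - (S.cardR i : ℝ) / (S.normb i : ℝ)) L]
    refine Finset.prod_congr rfl (fun i _ => ?_)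
    have hn : ((S.normb (i : ℕ) : ℝ)) ≠ 0 := by
      exact_mod_cast (S.normb_pos (i : ℕ)).ne'
    field_simp
  have := hasDensity_preimage π hπ hI B
  rw [hpre, hcard] at this
  exact this

/-- Partial products of the density product. -/
def PL (S : Sieve O) (L : ℕ) : ℝ :=
  ∏ i ∈ Finset.range L, (1 - (S.cardR i : ℝ) / (S.normb i : ℝ))

lemma Sieve.factor_pos (S : Sieve O) (i : ℕ) : 0 < 1 - (S.cardR i : ℝ) / (S.normb i : ℝ) := by
  have hn : (0:ℝ) < (S.normb i : ℝ) := by exact_mod_cast S.normb_pos i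
  have : (S.cardR i : ℝ) / (S.normb i : ℝ) < 1 := by
    rw [div_lt_one hn]
    exact_mod_cast S.cardR_lt i
  linarith

lemma Sieve.factor_le_one (S : Sieve O) (i : ℕ) :
    1 - (S.cardR i : ℝ) / (S.normb i : ℝ) ≤ 1 := by
  have hn : (0:ℝ) < (S.normb i : ℝ) := by exact_mod_cast S.normb_pos i
  have : (0:ℝ) ≤ (S.cardR i : ℝ) / (S.normb i : ℝ) := by positivity
  linarith

lemma PL_pos (S : Sieve O) (L : ℕ) : 0 < PL S L :=
  Finset.prod_pos (fun i _ => S.factor_pos i)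

lemma PL_antitone (S : Sieve O) : Antitone (PL S) := by
  apply antitone_nat_of_succ_le
  intro L
  rw [PL, Finset.prod_range_succ]
  calc PL S L * (1 - (S.cardR L : ℝ) / (S.normb L : ℝ)) ≤ PL S L * 1 :=
        mul_le_mul_of_nonneg_left (S.factor_le_one L) (PL_pos S L).le
    _ = PL S L := mul_one _

lemma tendsto_PL (S : Sieve O) : Tendsto (PL S) atTop (𝓝 (⨅ L, PL S L)) :=
  tendsto_atTop_ciInf (PL_antitone S)
    ⟨0, by rintro x ⟨L, rfl⟩; exact (PL_pos S L).le⟩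

lemma one_sub_sum_le_prod_one_sub (s : Finset ℕ) (x : ℕ → ℝ)
    (h0 : ∀ i ∈ s, 0 ≤ x i) (h1 : ∀ i ∈ s, x i ≤ 1) :
    1 - ∑ i ∈ s, x i ≤ ∏ i ∈ s, (1 - x i) := by
  classical
  induction s using Finset.cons_induction with
  | empty => simp
  | cons a s ha ih =>
    rw [Finset.sum_cons, Finset.prod_cons]
    have ih' := ih (fun i hi => h0 i (Finset.mem_cons.mpr (Or.inr hi)))
      (fun i hi => h1 i (Finset.mem_cons.mpr (Or.inr hi)))
    have hxa0 : 0 ≤ x a := h0 a (Finset.mem_cons_self a s)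
    have hxa1 : x a ≤ 1 := h1 a (Finset.mem_cons_self a s)
    have hs0 : 0 ≤ ∑ i ∈ s, x i := Finset.sum_nonneg (fun i hi => h0 i (Finset.mem_cons.mpr (Or.inr hi)))
    nlinarith [ih']

lemma iInf_PL_pos (S : Sieve O)
    (hE : Summable fun i => (S.cardR i : ℝ) / (S.normb i : ℝ)) :
    0 < ⨅ L, PL S L := by
  set x : ℕ → ℝ := fun i => (S.cardR i : ℝ) / (S.normb i : ℝ) with hx
  have hx0 : ∀ i, 0 ≤ x i := fun i => by positivity
  have hx1 : ∀ i, x i ≤ 1 := fun i => by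
    have := S.factor_pos i; rw [hx]; simp only; linarith
  have hT := hE.hasSum.tendsto_sum_nat
  rw [Metric.tendsto_atTop] at hT
  obtain ⟨L₀, hL₀⟩ := hT (1/4) (by norm_num)
  have htail : ∀ L, L₀ ≤ L → ∑ i ∈ Finset.Ico L₀ L, x i ≤ 1/2 := by
    intro L hL
    have h1 := hL₀ L₀ le_rfl
    have h2 := hL₀ L hL
    rw [Finset.sum_Ico_eq_sub _ hL]
    rw [Real.dist_eq] at h1 h2
    have := abs_lt.mp h1; have := abs_lt.mp h2
    linarith [(abs_lt.mp h1).1, (abs_lt.mp h1).2, (abs_lt.mp h2).1, (abs_lt.mp h2).2]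
  have hlow : ∀ L, PL S L₀ / 2 ≤ PL S L := by
    intro L
    rcases le_or_gt L L₀ with h | h
    · have := PL_antitone S h
      have := PL_pos S L₀
      linarith
    · have hsplit : PL S L = PL S L₀ * ∏ i ∈ Finset.Ico L₀ L, (1 - x i) := by
        rw [PL, PL, ← Finset.prod_range_mul_prod_Ico _ h.le]
      have hw := one_sub_sum_le_prod_one_sub (Finset.Ico L₀ L) x
        (fun i _ => hx0 i) (fun i _ => hx1 i)
      have hts := htail L h.le
      have hp0 := PL_pos S L₀
      rw [hsplit]
      nlinarith [hw, hts]
  have : PL S L₀ / 2 ≤ ⨅ L, PL S L := le_ciInf hlow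
  have := PL_pos S L₀
  linarith

lemma ncard_biUnion_le {α ι : Type*} (s : Finset ι) (E : ι → Set α)
    (hE : ∀ i, (E i).Finite) : (⋃ i ∈ s, E i).ncard ≤ ∑ i ∈ s, (E i).ncard := by
  classical
  induction s using Finset.cons_induction with
  | empty => simp
  | cons a s ha ih =>
    rw [Finset.sum_cons]
    have : (⋃ i ∈ Finset.cons a s ha, E i) = E a ∪ ⋃ i ∈ s, E i := by
      simp [Finset.mem_cons, Set.iUnion_or, Set.iUnion_union_distrib]
    rw [this]
    exact (Set.ncard_union_le _ _).trans (by omega)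

lemma ncard_I_tendsto_atTop [Infinite O] {I : ℕ → Set O} (hI : IsFolner I) :
    Tendsto (fun N => ((I N).ncard : ℝ)) atTop atTop := by
  classical
  rw [tendsto_atTop]
  intro b
  obtain ⟨k, hk⟩ : ∃ k : ℕ, b ≤ k := exists_nat_ge b
  rcases Nat.eq_zero_or_pos k with rfl | hkpos
  · filter_upwards with N
    have h0 : (0:ℝ) ≤ ((I N).ncard : ℝ) := Nat.cast_nonneg _
    simp only [Nat.cast_zero] at hk
    linarith
  suffices h : ∀ᶠ N in atTop, (k:ℝ) ≤ ((I N).ncard:ℝ) by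
    filter_upwards [h] with N h using le_trans hk h
  set e := Infinite.natEmbedding O
  have hev : ∀ᶠ N in atTop, ∀ j ∈ Finset.range k,
      ((((e j + ·) '' I N) ∆ (I N)).ncard : ℝ) / ((I N).ncard : ℝ) < 1 / (2 * k) := by
    rw [Filter.eventually_all_finset]
    intro j _
    have := folner_ratio hI (e j)
    rw [Metric.tendsto_nhds] at this
    have := this (1 / (2 * k)) (by positivity)
    filter_upwards [this] with N hN
    rw [Real.dist_eq, sub_zero] at hN
    calc _ ≤ |((((e j + ·) '' I N) ∆ (I N)).ncard : ℝ) / ((I N).ncard : ℝ)| := le_abs_self _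
      _ < _ := hN
  filter_upwards [hev] with N hN
  set J := I N with hJ
  have hJfin : J.Finite := hI.1 N
  have hcpos : (0:ℝ) < (J.ncard : ℝ) := card_I_pos hI N
  set E : ℕ → Set O := fun j => J \ ((e j + ·) '' J) with hE
  have hEfin : ∀ j, (E j).Finite := fun j => hJfin.diff
  have hEcard : ∀ j ∈ Finset.range k, ((E j).ncard : ℝ) ≤ (J.ncard : ℝ) / (2 * k) := by
    intro j hj
    have h1 := hN j hj
    rw [div_lt_div_iff₀ (by positivity) (by positivity)] at h1
    have h2 : ((E j).ncard : ℝ) ≤ ((((e j + ·) '' J) ∆ J).ncard : ℝ) := by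
      exact_mod_cast Set.ncard_le_ncard (by rw [Set.symmDiff_def]; exact fun x hx => Or.inr hx)
        (by rw [Set.symmDiff_def]; exact ((hJfin.image _).diff).union (hJfin.diff))
    have h2k : (0:ℝ) < 2 * k := by positivity
    rw [le_div_iff₀ h2k]
    nlinarith [h2, h1]
  have hex : ∃ y ∈ J, ∀ j ∈ Finset.range k, y ∈ (e j + ·) '' J := by
    by_contra hcon
    push_neg at hcon
    have hsub : J ⊆ ⋃ j ∈ Finset.range k, E j := by
      intro y hy
      obtain ⟨j, hj, hyj⟩ := hcon y hy
      exact Set.mem_biUnion hj ⟨hy, hyj⟩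
    have h1 : (J.ncard : ℝ) ≤ ((⋃ j ∈ Finset.range k, E j).ncard : ℝ) := by
      exact_mod_cast Set.ncard_le_ncard hsub (((Finset.range k).finite_toSet).biUnion (fun i _ => hEfin i))
    have h2 : ((⋃ j ∈ Finset.range k, E j).ncard : ℝ) ≤ ∑ j ∈ Finset.range k, ((E j).ncard : ℝ) := by
      exact_mod_cast ncard_biUnion_le (Finset.range k) E hEfin
    have h3 : ∑ j ∈ Finset.range k, ((E j).ncard : ℝ) ≤ ∑ _j ∈ Finset.range k, (J.ncard : ℝ) / (2 * k) :=
      Finset.sum_le_sum hEcard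
    rw [Finset.sum_const, Finset.card_range, nsmul_eq_mul] at h3
    have hk1 : (1:ℝ) ≤ k := by exact_mod_cast hkpos
    have : (k:ℝ) * ((J.ncard : ℝ) / (2 * k)) = (J.ncard : ℝ) / 2 := by
      field_simp
    linarith [h1, h2, h3, this ▸ h3]
  obtain ⟨y, hy, hyall⟩ := hex
  set F : Finset O := (Finset.range k).image (fun j => y - e j) with hF
  have hFcard : F.card = k := by
    rw [hF, Finset.card_image_of_injective _
      (fun a b hab => e.injective (sub_right_injective hab)), Finset.card_range]
  have hFsub : (↑F : Set O) ⊆ J := by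
    intro z hz
    simp only [hF, Finset.coe_image, Set.mem_image, Finset.mem_coe, Finset.mem_range] at hz
    obtain ⟨j, hj, rfl⟩ := hz
    obtain ⟨w, hw, hwy⟩ := hyall j (Finset.mem_range.mpr hj)
    have : y - e j = w := by rw [← hwy]; ring
    rw [this]; exact hw
  have : F.card ≤ J.ncard := by
    rw [← Set.ncard_coe_finset F]
    exact Set.ncard_le_ncard hFsub hJfin
  rw [hFcard] at this
  exact_mod_cast this

lemma infinite_of_hasDensity_pos [Infinite O] {I : ℕ → Set O} (hI : IsFolner I)
    {T : Set O} {d : ℝ} (hd : HasDensity I T d) (hpos : 0 < d) : T.Infinite := by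
  intro hTfin
  have hbound : ∀ N, dens I T N ≤ (T.ncard : ℝ) / ((I N).ncard : ℝ) := by
    intro N
    apply div_le_div_of_nonneg_right _ (card_I_pos hI N).le
    exact_mod_cast Set.ncard_le_ncard Set.inter_subset_left hTfin
  have h0 : Tendsto (fun N => (T.ncard : ℝ) / ((I N).ncard : ℝ)) atTop (𝓝 0) :=
    Tendsto.div_atTop tendsto_const_nhds (ncard_I_tendsto_atTop hI)
  have hT0 : Tendsto (dens I T) atTop (𝓝 0) :=
    squeeze_zero (fun N => dens_nonneg T N) hbound h0
  rw [hasDensity_iff] at hd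
  have := tendsto_nhds_unique hd hT0
  exact absurd this (by linarith)

/-- Core density theorem for a sieve with weak light tails. -/
lemma Sieve.core (S : Sieve O) {I : ℕ → Set O} (hI : IsFolner I)
    (hE : Summable fun i => (S.cardR i : ℝ) / (S.normb i : ℝ))
    (hW : WeakLightTailsFam I S.RSet) :
    HasDensity I S.FR (⨅ L, PL S L) := by
  set P := ⨅ L, PL S L with hP
  set D : ℕ → Set O := fun L => unionGe S.RSet L \ unionLt S.RSet L with hD
  have hdecomp : ∀ L N, dens I ((unionLt S.RSet L)ᶜ) N = dens I S.FR N + dens I (D L) N := by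
    intro L N
    have hseteq : (unionLt S.RSet L)ᶜ ∩ I N = (S.FR ∩ I N) ∪ (D L ∩ I N) := by
      ext x
      simp only [Set.mem_inter_iff, Set.mem_compl_iff, Set.mem_union, hD, Set.mem_diff,
        Sieve.FR, unionLt, unionGe, Set.mem_iUnion, not_exists]
      constructor
      · rintro ⟨hnot, hxI⟩
        by_cases hx : ∃ i, x ∈ S.RSet i
        · obtain ⟨i, hi⟩ := hx
          have hiL : L ≤ i := by
            by_contra hlt
            exact hnot i (Nat.lt_of_not_le hlt) hi
          exact Or.inr ⟨⟨⟨i, hiL, hi⟩, fun i hi2 => hnot i hi2⟩, hxI⟩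
        · push_neg at hx
          exact Or.inl ⟨fun i => hx i, hxI⟩
      · rintro (⟨hfr, hxI⟩ | ⟨⟨_, hnot⟩, hxI⟩)
        · exact ⟨fun i _ => hfr i, hxI⟩
        · exact ⟨hnot, hxI⟩
    have hdisj : Disjoint (S.FR ∩ I N) (D L ∩ I N) := by
      rw [Set.disjoint_left]
      rintro x ⟨hfr, _⟩ ⟨⟨hge, _⟩, _⟩
      simp only [Sieve.FR, Set.mem_compl_iff, Set.mem_iUnion, not_exists] at hfr
      simp only [unionGe, Set.mem_iUnion] at hge
      obtain ⟨i, _, hi⟩ := hge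
      exact hfr i hi
    have hncard : ((unionLt S.RSet L)ᶜ ∩ I N).ncard = (S.FR ∩ I N).ncard + (D L ∩ I N).ncard := by
      rw [hseteq]
      exact Set.ncard_union_eq hdisj ((hI.1 N).inter_of_right _) ((hI.1 N).inter_of_right _)
    unfold dens
    rw [hncard]
    push_cast
    rw [add_div]
  rw [hasDensity_iff, Metric.tendsto_nhds]
  intro ε hε
  have h1 : ∀ᶠ L in atTop, |PL S L - P| < ε / 4 := by
    have := tendsto_PL S
    rw [Metric.tendsto_nhds] at this
    filter_upwards [this (ε / 4) (by linarith)] with L hL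
    rwa [Real.dist_eq] at hL
  have h2 : ∀ᶠ L in atTop, upperDensity I (D L) < ε / 4 := by
    have hW' : Tendsto (fun L => upperDensity I (unionGe S.RSet L \ unionLt S.RSet L))
        atTop (𝓝 0) := hW
    rw [Metric.tendsto_nhds] at hW'
    filter_upwards [hW' (ε / 4) (by linarith)] with L hL
    calc upperDensity I (D L) ≤ |upperDensity I (D L) - 0| := by
          rw [sub_zero]; exact le_abs_self _
      _ < ε / 4 := by rwa [Real.dist_eq] at hL
  obtain ⟨L, hL1, hL2⟩ := (h1.and h2).exists
  have h3 : ∀ᶠ N in atTop, |dens I ((unionLt S.RSet L)ᶜ) N - PL S L| < ε / 4 := by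
    have := (S.hasDensity_FRlt hI L)
    rw [hasDensity_iff, Metric.tendsto_nhds] at this
    filter_upwards [this (ε / 4) (by linarith)] with N hN
    rwa [Real.dist_eq] at hN
  have h4 : ∀ᶠ N in atTop, dens I (D L) N < ε / 4 + ε / 4 := by
    have hlim : limsup (dens I (D L)) atTop < ε / 4 + ε / 4 := by
      rw [← upperDensity_eq]
      linarith
    exact eventually_lt_of_limsup_lt hlim
      (isBoundedUnder_of ⟨1, fun N => dens_le_one hI _ N⟩)
  filter_upwards [h3, h4] with N hN3 hN4
  rw [Real.dist_eq]
  have hdec := hdecomp L N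
  have hDnn := dens_nonneg (I := I) (D L) N
  have habs := abs_lt.mp hN3
  have habs2 := abs_lt.mp hL1
  rw [abs_lt]
  constructor <;> nlinarith [habs.1, habs.2, habs2.1, habs2.2, hN4, hDnn, hdec]

lemma upperDensity_nonneg {I : ℕ → Set O} (hI : IsFolner I) (B : Set O) :
    0 ≤ upperDensity I B := by
  rw [upperDensity_eq]
  exact le_limsup_of_frequently_le (Filter.Frequently.of_forall (fun N => dens_nonneg B N))
    (isBoundedUnder_of ⟨1, fun N => dens_le_one hI B N⟩)

lemma dens_translate_le {I : ℕ → Set O} (hI : IsFolner I) (B : Set O) (a : O) (N : ℕ) :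
    dens I ((fun x => -a + x) '' B) N ≤ dens I B N
      + ((((a + ·) '' I N) ∆ (I N)).ncard : ℝ) / ((I N).ncard : ℝ) := by
  have hia : Function.Injective (fun x : O => a + x) := add_right_injective a
  have hkey : (((fun x => -a + x) '' B) ∩ I N).ncard = (B ∩ ((a + ·) '' I N)).ncard := by
    have himg : (fun x => a + x) '' (((fun x => -a + x) '' B) ∩ I N)
        = B ∩ ((a + ·) '' I N) := by
      rw [Set.image_inter hia]
      congr 1
      rw [Set.image_image]
      simp only [add_neg_cancel_left, Set.image_id']
    rw [← himg, Set.ncard_image_of_injective _ hia]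
  unfold dens
  rw [hkey, ← add_div]
  apply div_le_div_of_nonneg_right _ (card_I_pos hI N).le
  have h1 := ncard_inter_le_of_le B (hI.1 N) ((hI.1 N).image (a + ·))
  have h2 : ((((a + ·) '' I N) \ I N).ncard : ℝ) ≤ ((((a + ·) '' I N) ∆ (I N)).ncard : ℝ) := by
    exact_mod_cast Set.ncard_le_ncard (by rw [Set.symmDiff_def]; exact Set.subset_union_left)
      (by rw [Set.symmDiff_def]; exact (((hI.1 N).image _).diff).union ((hI.1 N).diff))
  linarith

lemma upperDensity_shift_le {I : ℕ → Set O} (hI : IsFolner I) (A : Finset O) {B B' : Set O}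
    (hsub : B' ⊆ ⋃ a ∈ A, (fun x => -a + x) '' B) :
    upperDensity I B' ≤ (A.card : ℝ) * upperDensity I B := by
  set δ := upperDensity I B with hδ
  have hδ0 : 0 ≤ δ := upperDensity_nonneg hI B
  have key : ∀ ε : ℝ, 0 < ε → upperDensity I B' ≤ (A.card : ℝ) * δ + ε := by
    intro ε hε
    set ε' : ℝ := ε / (A.card + 1) with hε'
    have hε'pos : 0 < ε' := by positivity
    have hev1 : ∀ᶠ N in atTop, dens I B N < δ + ε' / 2 := by
      apply eventually_lt_of_limsup_lt
      · rw [hδ, upperDensity_eq] at *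
        linarith
      · exact isBoundedUnder_of ⟨1, fun N => dens_le_one hI B N⟩
    have hev2 : ∀ᶠ N in atTop, ∀ a ∈ A,
        ((((a + ·) '' I N) ∆ (I N)).ncard : ℝ) / ((I N).ncard : ℝ) < ε' / 2 := by
      rw [Filter.eventually_all_finset]
      intro a _
      have := folner_ratio hI a
      rw [Metric.tendsto_nhds] at this
      filter_upwards [this (ε' / 2) (by positivity)] with N hN
      rw [Real.dist_eq, sub_zero] at hN
      exact lt_of_abs_lt hN
    rw [upperDensity_eq]
    apply limsup_le_of_le (isCoboundedUnder_le_of_le atTop (fun N => dens_nonneg B' N))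
    filter_upwards [hev1, hev2] with N h1 h2
    have hstep1 : dens I B' N ≤ ∑ a ∈ A, dens I ((fun x => -a + x) '' B) N := by
      unfold dens
      rw [← Finset.sum_div]
      apply div_le_div_of_nonneg_right _ (card_I_pos hI N).le
      have hsub2 : B' ∩ I N ⊆ ⋃ a ∈ A, (((fun x => -a + x) '' B) ∩ I N) := by
        intro x hx
        obtain ⟨hx1, hx2⟩ := hx
        obtain ⟨s, ⟨a, rfl⟩, hs2⟩ := hsub hx1
        simp only [Set.mem_iUnion] at hs2 ⊢
        obtain ⟨ha, hxs⟩ := hs2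
        exact ⟨a, ha, hxs, hx2⟩
      have hb1 : (B' ∩ I N).ncard ≤ (⋃ a ∈ A, (((fun x => -a + x) '' B) ∩ I N)).ncard :=
        Set.ncard_le_ncard hsub2 (A.finite_toSet.biUnion (fun a _ => (hI.1 N).inter_of_right _))
      have hb2 := ncard_biUnion_le A (fun a => ((fun x => -a + x) '' B) ∩ I N)
        (fun a => (hI.1 N).inter_of_right _)
      exact_mod_cast hb1.trans hb2
    have hstep2 : ∑ a ∈ A, dens I ((fun x => -a + x) '' B) N
        ≤ ∑ _a ∈ A, (δ + ε' / 2 + ε' / 2) := by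
      apply Finset.sum_le_sum
      intro a ha
      have := dens_translate_le hI B a N
      have h2a := h2 a ha
      linarith
    rw [Finset.sum_const, nsmul_eq_mul] at hstep2
    have hcard1 : (A.card : ℝ) ≤ (A.card : ℝ) + 1 := by linarith
    have : (A.card : ℝ) * (δ + ε' / 2 + ε' / 2) ≤ (A.card : ℝ) * δ + ε := by
      have hε'eq : (A.card : ℝ) * ε' ≤ ε := by
        have h1 : ((A.card : ℝ) + 1) * ε' = ε := by
          rw [hε']; field_simp
        nlinarith [hε'pos]
      nlinarith
    linarith
  by_contra hcon
  push_neg at hcon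
  have := key ((upperDensity I B' - (A.card : ℝ) * δ) / 2) (by linarith)
  linarith

open Classical in
/-- The sieve shifted by a finite admissible set. -/
def Sieve.shift (S : Sieve O) (A : Finset O)
    (hAdm : ∀ i, -(↑A : Set O) + S.RSet i ≠ Set.univ) : Sieve O where
  b := S.b
  gen := fun i => -A + S.gen i
  coprime := S.coprime
  finQuot := S.finQuot
  ne_univ := by
    intro i
    have h : (↑(-A + S.gen i) : Set O) = -(↑A : Set O) + (↑(S.gen i) : Set O) := by
      push_cast
      rfl
    rw [h, add_assoc]
    exact hAdm i

open Classical in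
lemma Sieve.shift_RSet (S : Sieve O) (A : Finset O)
    (hAdm : ∀ i, -(↑A : Set O) + S.RSet i ≠ Set.univ) (i : ℕ) :
    (S.shift A hAdm).RSet i = -(↑A : Set O) + S.RSet i := by
  show (↑(-A + S.gen i) : Set O) + (↑(S.b i) : Set O) = _
  have h : (↑(-A + S.gen i) : Set O) = -(↑A : Set O) + (↑(S.gen i) : Set O) := by
    push_cast
    rfl
  rw [h, add_assoc]
  rfl

end Aux

/-- **Density of pattern occurrences.** If `R` is an Erdős sieve with weak light tails for a
Følner sequence `I` and `A` is a finite `R`-admissible set, then the set of `x` with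
`x + A ⊆ F_R` has density `∏ (1 - |-A + R_i|/N(b_i)) > 0` along `I`; in particular it is
infinite. -/
theorem pattern_density_pos
    {m : ℕ} (hm : 0 < m) (K : Fin m → Type) [∀ j, Field (K j)]
    [∀ j, NumberField (K j)]
    (S : Sieve (OK K)) (I : ℕ → Set (OK K)) (hI : IsFolner I)
    (hWLT : S.HasWeakLightTails I) (A : Finset (OK K))
    (hAdm : S.Admissible (↑A : Set (OK K))) :
    HasDensity I {x : OK K | ∀ a ∈ A, x + a ∈ S.FR} (S.prodDensityShift (↑A : Set (OK K)))
    ∧ 0 < S.prodDensityShift (↑A : Set (OK K))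
    ∧ {x : OK K | ∀ a ∈ A, x + a ∈ S.FR}.Infinite := by
  classical
  obtain ⟨hE, hW⟩ := hWLT
  have hAdm' : ∀ i, -(↑A : Set (OK K)) + S.RSet i ≠ Set.univ := hAdm
  set S' := S.shift A hAdm' with hS'
  have hRSet' : ∀ i, S'.RSet i = -(↑A : Set (OK K)) + S.RSet i :=
    fun i => S.shift_RSet A hAdm' i
  have hmem' : ∀ i x, x ∈ S'.RSet i ↔ ∃ a ∈ A, x + a ∈ S.RSet i := by
    intro i x
    rw [hRSet' i, Set.mem_add]
    constructor
    · rintro ⟨u, hu, r, hr, rfl⟩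
      rw [Set.mem_neg] at hu
      exact ⟨-u, hu, by rwa [show u + r + -u = r by ring]⟩
    · rintro ⟨a, ha, hr⟩
      exact ⟨-a, by rwa [Set.mem_neg, neg_neg], x + a, hr, by ring⟩
  have hFR' : S'.FR = {x : OK K | ∀ a ∈ A, x + a ∈ S.FR} := by
    ext x
    simp only [Sieve.FR, Set.mem_compl_iff, Set.mem_iUnion, not_exists, Set.mem_setOf_eq]
    constructor
    · intro h a ha i hxa
      exact h i ((hmem' i x).mpr ⟨a, ha, hxa⟩)
    · intro h i hx
      obtain ⟨a, ha, hxa⟩ := (hmem' i x).mp hx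
      exact h a ha i hxa
  have hnorm' : ∀ i, S'.normb i = S.normb i := fun i => rfl
  have hcardR' : ∀ i, S'.cardR i = S.cardShift (↑A) i := by
    intro i
    rw [Sieve.cardR, Sieve.cardShift]
    congr 1
    rw [hRSet' i]
    rfl
  have hPD : S.prodDensityShift (↑A) = ⨅ L, PL S' L := by
    rw [Sieve.prodDensityShift]
    congr 1
    funext L
    rw [PL]
    exact Finset.prod_congr rfl fun i _ => by rw [hcardR' i, hnorm' i]
  have hcard_le : ∀ i, S'.cardR i ≤ A.card * S.cardR i := by
    intro i
    haveI := S.finQuot i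
    have hU : S'.RSet i = ⋃ a ∈ A, (fun x => -a + x) '' S.RSet i := by
      ext x
      simp only [Set.mem_iUnion, Set.mem_image, Finset.mem_coe, hmem' i x]
      constructor
      · rintro ⟨a, ha, hxa⟩
        exact ⟨a, ha, x + a, hxa, by ring⟩
      · rintro ⟨a, ha, r, hr, rfl⟩
        exact ⟨a, ha, by rwa [show -a + r + a = r by ring]⟩
    have hterm : ∀ a : OK K, ((Ideal.Quotient.mk (S.b i)) ''
        ((fun x => -a + x) '' S.RSet i)).ncard = S.cardR i := by
      intro a
      rw [Set.image_image]
      have hfe : (fun x => (Ideal.Quotient.mk (S.b i)) (-a + x))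
          = (fun z => (Ideal.Quotient.mk (S.b i)) (-a) + z) ∘ (Ideal.Quotient.mk (S.b i)) := by
        funext x
        exact RingHom.map_add _ (-a) x
      rw [hfe, Set.image_comp, Set.ncard_image_of_injective _ (add_right_injective _),
        Sieve.cardR, Nat.card_coe_set_eq]
    have h1 : S'.cardR i = ((Ideal.Quotient.mk (S.b i)) ''
        (⋃ a ∈ A, (fun x => -a + x) '' S.RSet i)).ncard := by
      rw [Sieve.cardR, Nat.card_coe_set_eq, hU]
      rfl
    rw [h1, Set.image_iUnion₂]
    calc (⋃ a ∈ A, (Ideal.Quotient.mk (S.b i)) '' ((fun x => -a + x) '' S.RSet i)).ncard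
        ≤ ∑ a ∈ A, ((Ideal.Quotient.mk (S.b i)) '' ((fun x => -a + x) '' S.RSet i)).ncard :=
          ncard_biUnion_le A _ (fun a => Set.toFinite _)
      _ = ∑ _a ∈ A, S.cardR i := Finset.sum_congr rfl (fun a _ => hterm a)
      _ = A.card * S.cardR i := by rw [Finset.sum_const, smul_eq_mul]
  have hE' : Summable (fun i => (S'.cardR i : ℝ) / (S'.normb i : ℝ)) := by
    apply Summable.of_nonneg_of_le (fun i => by positivity) (fun i => ?_)
      (hE.mul_left (A.card : ℝ))
    rw [hnorm' i]
    have hle : ((S'.cardR i : ℝ)) ≤ ((A.card * S.cardR i : ℕ) : ℝ) := by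
      exact_mod_cast hcard_le i
    calc (S'.cardR i : ℝ) / (S.normb i : ℝ)
        ≤ ((A.card * S.cardR i : ℕ) : ℝ) / (S.normb i : ℝ) := by
          apply div_le_div_of_nonneg_right hle
          have := S.normb_pos i
          positivity
      _ = (A.card : ℝ) * ((S.cardR i : ℝ) / (S.normb i : ℝ)) := by
          push_cast
          ring
  have hW' : WeakLightTailsFam I S'.RSet := by
    show Tendsto (fun L => upperDensity I (unionGe S'.RSet L \ unionLt S'.RSet L)) atTop (𝓝 0)
    have hWS : Tendsto (fun L => upperDensity I (unionGe S.RSet L \ unionLt S.RSet L))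
        atTop (𝓝 0) := hW
    have hb : ∀ L, upperDensity I (unionGe S'.RSet L \ unionLt S'.RSet L)
        ≤ (A.card : ℝ) * upperDensity I (unionGe S.RSet L \ unionLt S.RSet L) := by
      intro L
      apply upperDensity_shift_le hI A
      intro x hx
      obtain ⟨hge, hlt⟩ := hx
      rw [unionGe, Set.mem_iUnion] at hge
      obtain ⟨i, hge⟩ := hge
      rw [Set.mem_iUnion] at hge
      obtain ⟨hiL, hxi⟩ := hge
      obtain ⟨a, ha, hxa⟩ := (hmem' i x).mp hxi
      refine Set.mem_biUnion ha ⟨x + a, ⟨?_, ?_⟩, by ring⟩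
      · rw [unionGe, Set.mem_iUnion]
        exact ⟨i, Set.mem_iUnion.mpr ⟨hiL, hxa⟩⟩
      · intro hmem
        rw [unionLt, Set.mem_iUnion] at hmem
        obtain ⟨j, hmem⟩ := hmem
        rw [Set.mem_iUnion] at hmem
        obtain ⟨hjL, hxj⟩ := hmem
        apply hlt
        rw [unionLt, Set.mem_iUnion]
        exact ⟨j, Set.mem_iUnion.mpr ⟨hjL, (hmem' j x).mpr ⟨a, ha, hxj⟩⟩⟩
    have h0 : ∀ L, 0 ≤ upperDensity I (unionGe S'.RSet L \ unionLt S'.RSet L) :=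
      fun L => upperDensity_nonneg hI _
    have hWc : Tendsto (fun L => (A.card : ℝ)
        * upperDensity I (unionGe S.RSet L \ unionLt S.RSet L)) atTop (𝓝 0) := by
      have := hWS.const_mul (A.card : ℝ)
      simpa using this
    exact tendsto_of_tendsto_of_tendsto_of_le_of_le tendsto_const_nhds hWc h0 hb
  have hcore := S'.core hI hE' hW'
  rw [hFR'] at hcore
  haveI : ∀ j, Infinite (NumberField.RingOfIntegers (K j)) := fun j => inferInstance
  haveI : Infinite (OK K) := Pi.infinite_of_exists_right ⟨0, hm⟩
  rw [hPD]
  exact ⟨hcore, iInf_PL_pos S' hE',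
    infinite_of_hasDensity_pos hI hcore (iInf_PL_pos S' hE')⟩

end ErdosSieve
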